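/- Suppose there exists α* > 1 such that for every symmetric real matrix A with nonnegative entries and at most one positive eigenvalue, the entrywise power A^{∘α*} also has nonnegative entries and at most one positive eigenvalue. Then the same closure property holds for every α > 1. -/

import Mathlib

open Finset

/-- Membership in the class 𝒜: real symmetric matrices with nonnegative entries
and at most one positive eigenvalue. -/
def MemA {n : ℕ} (A : Matrix (Fin n) (Fin n) ℝ) : Prop :=
  ∃ hA : A.IsHermitian, (∀ i j, 0 ≤ A i j) ∧
    (Finset.univ.filter fun i => 0 < hA.eigenvalues i).card ≤ 1

/-- Entrywise (Hadamard) real power of a matrix. -/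
noncomputable def hadamardPow {n : ℕ} (A : Matrix (Fin n) (Fin n) ℝ) (α : ℝ) :
    Matrix (Fin n) (Fin n) ℝ :=
  Matrix.of fun i j => (A i j) ^ α

variable {n : ℕ} {A : Matrix (Fin n) (Fin n) ℝ}

noncomputable def qf (A : Matrix (Fin n) (Fin n) ℝ) (x : Fin n → ℝ) : ℝ :=
  ∑ i, ∑ j, x i * x j * A i j

lemma entry_eq (hA : A.IsHermitian) (i j : Fin n) :
    A i j = ∑ k, hA.eigenvalues k * hA.eigenvectorBasis k i * hA.eigenvectorBasis k j := by
  nth_rewrite 1 [hA.spectral_theorem]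
  simp [Matrix.mul_apply, Matrix.diagonal_apply, Finset.sum_ite_eq, mul_comm, mul_assoc,
    Matrix.conjTranspose_apply]

lemma b_orthog (hA : A.IsHermitian) (k l : Fin n) :
    ∑ i, hA.eigenvectorBasis k i * hA.eigenvectorBasis l i = if k = l then 1 else 0 := by
  have h := hA.eigenvectorBasis.orthonormal
  rw [orthonormal_iff_ite] at h
  have := h k l
  rw [PiLp.inner_apply] at this
  simpa [RCLike.inner_apply, starRingEnd_apply, mul_comm] using this

lemma b_orthog' (hA : A.IsHermitian) (i j : Fin n) :
    ∑ k, hA.eigenvectorBasis k i * hA.eigenvectorBasis k j = if i = j then 1 else 0 := by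
  have h := (Matrix.mem_unitaryGroup_iff).mp (hA.eigenvectorUnitary).2
  have := congrFun (congrFun (congrArg (fun M => (M : Matrix (Fin n) (Fin n) ℝ)) h) i) j
  simpa [Matrix.mul_apply, Matrix.one_apply, starRingEnd_apply] using this

/-- generic expansion of the quadratic form through an entrywise spectral formula -/
lemma qf_expand (hA : A.IsHermitian) (x : Fin n → ℝ) :
    qf A x = ∑ k, hA.eigenvalues k * (∑ i, x i * hA.eigenvectorBasis k i) ^ 2 := by
  unfold qf
  have : ∀ i j : Fin n, x i * x j * A i j
      = ∑ k, hA.eigenvalues k * (x i * hA.eigenvectorBasis k i) * (x j * hA.eigenvectorBasis k j) := by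
    intro i j
    rw [entry_eq hA i j, Finset.mul_sum]
    apply Finset.sum_congr rfl; intro k _; ring
  simp_rw [this]
  have swap1 : ∀ i : Fin n, ∑ j : Fin n, ∑ k : Fin n,
      hA.eigenvalues k * (x i * hA.eigenvectorBasis k i) * (x j * hA.eigenvectorBasis k j)
      = ∑ k : Fin n, ∑ j : Fin n,
      hA.eigenvalues k * (x i * hA.eigenvectorBasis k i) * (x j * hA.eigenvectorBasis k j) :=
    fun i => Finset.sum_comm
  simp_rw [swap1]
  rw [Finset.sum_comm]
  apply Finset.sum_congr rfl; intro k _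
  rw [pow_two, Finset.sum_mul_sum, Finset.mul_sum]
  apply Finset.sum_congr rfl; intro i _
  rw [Finset.mul_sum]
  apply Finset.sum_congr rfl; intro j _
  ring

lemma coeff_expand (hA : A.IsHermitian) (x : Fin n → ℝ) (c : Fin n → ℝ)
    (hx : ∀ i, x i = ∑ k, c k * hA.eigenvectorBasis k i) (m : Fin n) :
    ∑ i, x i * hA.eigenvectorBasis m i = c m := by
  simp_rw [hx, Finset.sum_mul]
  rw [Finset.sum_comm]
  simp_rw [mul_assoc, ← Finset.mul_sum, b_orthog hA]
  simp

lemma herm_entry (hA : A.IsHermitian) (i j : Fin n) : A j i = A i j := by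
  have := congrFun (congrFun hA.symm i) j
  simpa [Matrix.conjTranspose_apply] using this.symm

lemma qf_single (A : Matrix (Fin n) (Fin n) ℝ) (j : Fin n) :
    qf A (fun m => if m = j then (1:ℝ) else 0) = A j j := by
  unfold qf
  simp [ite_mul, Finset.sum_ite_eq']

lemma qf_pair (A : Matrix (Fin n) (Fin n) ℝ) {i j : Fin n} (hij : i ≠ j) :
    qf A (fun m => (if m = i then (1:ℝ) else 0) + (if m = j then 1 else 0))
      = A i i + A i j + A j i + A j j := by
  unfold qf
  simp [add_mul, mul_add, Finset.sum_add_distrib, ite_mul, mul_ite, Finset.sum_ite_eq',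
    hij, hij.symm]
  ring

lemma qf_le_of_nonpos_eigen (hA : A.IsHermitian)
    (h : ∀ m, hA.eigenvalues m ≤ 0) (x : Fin n → ℝ) : qf A x ≤ 0 := by
  rw [qf_expand hA]
  apply Finset.sum_nonpos
  intro m _
  exact mul_nonpos_of_nonpos_of_nonneg (h m) (sq_nonneg _)


lemma parseval' (hA : A.IsHermitian) (v : Fin n → ℝ) :
    ∑ m, (∑ i, v i * hA.eigenvectorBasis m i) ^ 2 = ∑ i, (v i) ^ 2 := by
  have : ∀ m : Fin n, (∑ i, v i * hA.eigenvectorBasis m i) ^ 2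
      = ∑ i, ∑ j, v i * v j * (hA.eigenvectorBasis m i * hA.eigenvectorBasis m j) := by
    intro m
    rw [pow_two, Finset.sum_mul_sum]
    exact Finset.sum_congr rfl fun i _ => Finset.sum_congr rfl fun j _ => by ring
  simp_rw [this]
  rw [Finset.sum_comm]
  have swap1 : ∀ i : Fin n, ∑ m : Fin n, ∑ j : Fin n,
      v i * v j * (hA.eigenvectorBasis m i * hA.eigenvectorBasis m j)
      = ∑ j : Fin n, ∑ m : Fin n,
      v i * v j * (hA.eigenvectorBasis m i * hA.eigenvectorBasis m j) := fun i => Finset.sum_comm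
  simp_rw [swap1, ← Finset.mul_sum, b_orthog' hA]
  simp [Finset.sum_ite_eq', pow_two]

lemma basis_expand (hA : A.IsHermitian) (v : Fin n → ℝ) (i : Fin n) :
    v i = ∑ m, (∑ j, v j * hA.eigenvectorBasis m j) * hA.eigenvectorBasis m i := by
  simp_rw [Finset.sum_mul, mul_assoc]
  rw [Finset.sum_comm]
  simp_rw [← Finset.mul_sum, b_orthog' hA]
  simp [Finset.sum_ite_eq']

/-- A1 : a hyperplane negativity condition forces at most one positive eigenvalue. -/
lemma card_le_one_of_hyperplane (hA : A.IsHermitian) (v : Fin n → ℝ)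
    (hv : ∀ x : Fin n → ℝ, (∑ i, x i * v i) = 0 → qf A x ≤ 0) :
    (Finset.univ.filter fun i => 0 < hA.eigenvalues i).card ≤ 1 := by
  rw [Finset.card_le_one]
  intro k hk l hl
  simp only [Finset.mem_filter, Finset.mem_univ, true_and] at hk hl
  by_contra hkl
  set b := hA.eigenvectorBasis with hb
  -- the quadratic form of x = c • b k + d • b l
  have coefsum : ∀ (c d : ℝ) (m : Fin n),
      (∑ i, (c * b k i + d * b l i) * b m i) = (if m = k then c else if m = l then d else 0) := by
    intro c d m
    simp_rw [add_mul, Finset.sum_add_distrib, mul_assoc, ← Finset.mul_sum]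
    rw [b_orthog hA k m, b_orthog hA l m]
    by_cases h1 : m = k
    · subst h1; simp [Ne.symm hkl, hkl]
    · by_cases h2 : m = l
      · subst h2; simp [h1, Ne.symm h1, hkl, Ne.symm hkl]
      · simp [h1, h2, Ne.symm h1, Ne.symm h2]
  have qfval : ∀ c d : ℝ, qf A (fun i => c * b k i + d * b l i)
      = hA.eigenvalues k * c ^ 2 + hA.eigenvalues l * d ^ 2 := by
    intro c d
    rw [qf_expand hA]
    simp_rw [← hb, coefsum c d]
    have : ∀ m : Fin n, hA.eigenvalues m * (if m = k then c else if m = l then d else 0) ^ 2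
        = (if m = k then hA.eigenvalues k * c ^ 2 else 0)
          + (if m = l then hA.eigenvalues l * d ^ 2 else 0) := by
      intro m
      by_cases h1 : m = k
      · subst h1; simp [hkl]
      · by_cases h2 : m = l
        · subst h2; simp [h1, Ne.symm h1]
        · simp [h1, h2]
    simp_rw [this, Finset.sum_add_distrib, Finset.sum_ite_eq', Finset.mem_univ, if_true]
  set p := ∑ i, b k i * v i with hp
  set r := ∑ i, b l i * v i with hr
  have hsum : (∑ i, (r * b k i + (-p) * b l i) * v i) = 0 := by
    simp_rw [add_mul, Finset.sum_add_distrib, mul_assoc, ← Finset.mul_sum]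
    rw [← hp, ← hr]; ring
  have h1 := hv _ hsum
  rw [qfval r (-p)] at h1
  have hr2 : r ^ 2 = 0 := by nlinarith [sq_nonneg r, sq_nonneg p]
  have hp2 : p ^ 2 = 0 := by nlinarith [sq_nonneg r, sq_nonneg p]
  have hrp : r = 0 ∧ p = 0 :=
    ⟨pow_eq_zero_iff (two_ne_zero) |>.mp hr2, pow_eq_zero_iff (two_ne_zero) |>.mp hp2⟩
  have hsum2 : (∑ i, (1 * b k i + (0:ℝ) * b l i) * v i) = 0 := by
    simp_rw [add_mul, Finset.sum_add_distrib, mul_assoc, ← Finset.mul_sum]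
    rw [← hp, ← hr]; simp [hrp.2]
  have h2 := hv _ hsum2
  rw [qfval 1 0] at h2
  nlinarith

/-- A2 : structure extracted from membership in the class. -/
lemma memA_structure (hA : A.IsHermitian) (hpos : ∀ i j, 0 ≤ A i j)
    (hcard : (Finset.univ.filter fun i => 0 < hA.eigenvalues i).card ≤ 1) :
    ∃ v : Fin n → ℝ, (∀ i, 0 ≤ v i) ∧ (∀ i j, v j = 0 → A i j = 0) ∧
      (∀ x : Fin n → ℝ, (∑ i, x i * v i) = 0 → qf A x ≤ 0) := by
  -- first: the diagonal/off-diagonal vanishing argument, abstracted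
  have vanish : ∀ (v : Fin n → ℝ),
      (∀ x : Fin n → ℝ, (∑ i, x i * v i) = 0 → qf A x ≤ 0) →
      ∀ i j : Fin n, v i = 0 → v j = 0 → A i j = 0 := by
    intro v hv i j hvi hvj
    have diag : ∀ m : Fin n, v m = 0 → A m m = 0 := by
      intro m hm
      have h1 : (∑ i, (fun m' => if m' = m then (1:ℝ) else 0) i * v i) = 0 := by
        simp [Finset.sum_ite_eq', hm]
      have := hv _ h1
      rw [qf_single] at this
      exact le_antisymm this (hpos m m)
    by_cases hij : i = j
    · subst hij; exact diag i hvi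
    · have h1 : (∑ m, ((fun m' => (if m' = i then (1:ℝ) else 0) + (if m' = j then 1 else 0)) m) * v m) = 0 := by
        simp [add_mul, Finset.sum_add_distrib, Finset.sum_ite_eq', hvi, hvj]
      have h2 := hv _ h1
      rw [qf_pair A hij] at h2
      rw [diag i hvi, diag j hvj, herm_entry hA i j] at h2
      have := hpos i j
      linarith
  by_cases hex : ∃ k, 0 < hA.eigenvalues k
  · obtain ⟨k₀, hk₀⟩ := hex
    have huniq : ∀ m, m ≠ k₀ → hA.eigenvalues m ≤ 0 := by
      intro m hm
      by_contra hmpos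
      push_neg at hmpos
      have h2 : 1 < (Finset.univ.filter fun i => 0 < hA.eigenvalues i).card := by
        apply Finset.one_lt_card.2
        exact ⟨m, by simp [hmpos], k₀, by simp [hk₀], hm⟩
      omega
    set b := hA.eigenvectorBasis with hb
    set u : Fin n → ℝ := fun i => b k₀ i with hu
    set v : Fin n → ℝ := fun i => |u i| with hvdef
    have hvnn : ∀ i, 0 ≤ v i := fun i => abs_nonneg _
    set cm : Fin n → ℝ := fun m => ∑ i, v i * b m i with hcm
    have husq : ∑ i, (u i) ^ 2 = 1 := by
      have := b_orthog hA k₀ k₀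
      simpa [pow_two] using this
    have hvsq : ∑ i, (v i) ^ 2 = 1 := by
      rw [← husq]
      exact Finset.sum_congr rfl fun i _ => by simp [hvdef, sq_abs]
    have hqu : qf A u = hA.eigenvalues k₀ := by
      rw [qf_expand hA]
      have hcoef : ∀ m : Fin n, (∑ i, u i * b m i) = if k₀ = m then 1 else 0 := by
        intro m; rw [hu]; exact b_orthog hA k₀ m
      simp_rw [← hb, hcoef]
      have : ∀ m : Fin n, hA.eigenvalues m * (if k₀ = m then (1:ℝ) else 0) ^ 2
          = if m = k₀ then hA.eigenvalues k₀ else 0 := by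
        intro m
        by_cases h : m = k₀
        · subst h; simp
        · have h2 : ¬ (k₀ = m) := fun hh => h hh.symm
          simp [h, h2]
      simp_rw [this, Finset.sum_ite_eq', Finset.mem_univ, if_true]
    have hquv : qf A u ≤ qf A v := by
      unfold qf
      apply Finset.sum_le_sum; intro i _
      apply Finset.sum_le_sum; intro j _
      have : u i * u j ≤ v i * v j := by
        rw [hvdef]; simpa [abs_mul] using le_abs_self (u i * u j)
      exact mul_le_mul_of_nonneg_right this (hpos i j)
    have hkey : ∑ m, (hA.eigenvalues m - hA.eigenvalues k₀) * (cm m) ^ 2 ≥ 0 := by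
      have e1 : qf A v = ∑ m, hA.eigenvalues m * (cm m) ^ 2 := qf_expand hA v
      have e2 : ∑ m, (cm m) ^ 2 = 1 := by rw [hcm]; rw [parseval' hA v]; exact hvsq
      have : ∑ m, (hA.eigenvalues m - hA.eigenvalues k₀) * (cm m) ^ 2
          = qf A v - hA.eigenvalues k₀ * ∑ m, (cm m) ^ 2 := by
        rw [e1, Finset.mul_sum, ← Finset.sum_sub_distrib]
        exact Finset.sum_congr rfl fun m _ => by ring
      rw [this, e2, mul_one]
      have := hquv; rw [hqu] at this; linarith
    have hcm0 : ∀ m, m ≠ k₀ → cm m = 0 := by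
      intro m hm
      have hterms : ∀ m' ∈ Finset.univ, (hA.eigenvalues m' - hA.eigenvalues k₀) * (cm m') ^ 2 ≤ 0 := by
        intro m' _
        by_cases h : m' = k₀
        · subst h; simp
        · exact mul_nonpos_of_nonpos_of_nonneg (by have := huniq m' h; linarith) (sq_nonneg _)
      have hsum0 : ∑ m', (hA.eigenvalues m' - hA.eigenvalues k₀) * (cm m') ^ 2 = 0 :=
        le_antisymm (Finset.sum_nonpos hterms) hkey
      have := (Finset.sum_eq_zero_iff_of_nonpos hterms).mp hsum0 m (Finset.mem_univ m)
      rcases mul_eq_zero.mp this with h | h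
      · exfalso; have := huniq m hm; have := hk₀; nlinarith [sq_nonneg (cm m)]
      · exact pow_eq_zero_iff two_ne_zero |>.mp h
    have hvexp : ∀ i, v i = cm k₀ * u i := by
      intro i
      have := basis_expand hA v i
      rw [Finset.sum_eq_single k₀ (fun m _ hm => by rw [show (∑ j, v j * b m j) = cm m from rfl, hcm0 m hm, zero_mul]) (fun h => absurd (Finset.mem_univ k₀) h)] at this
      exact this
    have hck : cm k₀ ≠ 0 := by
      intro h
      have : ∀ i, v i = 0 := fun i => by rw [hvexp i, h, zero_mul]
      have : ∑ i, (v i)^2 = 0 := Finset.sum_eq_zero fun i _ => by rw [this i]; ring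
      rw [hvsq] at this; norm_num at this
    -- the eigen-row property for v
    have hrow : ∀ j, ∑ i, A j i * v i = hA.eigenvalues k₀ * v j := by
      intro j
      have hmv := hA.mulVec_eigenvectorBasis k₀
      have hmvj := congrFun hmv j
      simp only [Matrix.mulVec, dotProduct, Pi.smul_apply, smul_eq_mul] at hmvj
      calc ∑ i, A j i * v i = cm k₀ * ∑ i, A j i * u i := by
            rw [Finset.mul_sum]; exact Finset.sum_congr rfl fun i _ => by rw [hvexp i]; ring
        _ = cm k₀ * (hA.eigenvalues k₀ * u j) := by
            have h' : ∑ i, A j i * u i = hA.eigenvalues k₀ * u j := hmvj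
            rw [h']
        _ = hA.eigenvalues k₀ * v j := by rw [hvexp j]; ring
    have hhyp : ∀ x : Fin n → ℝ, (∑ i, x i * v i) = 0 → qf A x ≤ 0 := by
      intro x hx
      have hxu : ∑ i, x i * u i = 0 := by
        have : (∑ i, x i * v i) = cm k₀ * ∑ i, x i * u i := by
          rw [Finset.mul_sum]; exact Finset.sum_congr rfl fun i _ => by rw [hvexp i]; ring
        rw [this] at hx
        exact (mul_eq_zero.mp hx).resolve_left hck
      rw [qf_expand hA]
      apply Finset.sum_nonpos
      intro m _
      by_cases h : m = k₀
      · subst h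
        have : (∑ i, x i * b m i) = 0 := hxu
        rw [this]; simp
      · exact mul_nonpos_of_nonpos_of_nonneg (huniq m h) (sq_nonneg _)
    refine ⟨v, hvnn, ?_, hhyp⟩
    intro i j hvj
    by_cases hvi : v i = 0
    · exact vanish v hhyp i j hvi hvj
    · -- use the eigen-row property at row j
      have h0 : ∑ i', A j i' * v i' = 0 := by rw [hrow j, hvj, mul_zero]
      have hterms : ∀ i' ∈ Finset.univ, 0 ≤ A j i' * v i' :=
        fun i' _ => mul_nonneg (hpos j i') (hvnn i')
      have := (Finset.sum_eq_zero_iff_of_nonneg hterms).mp h0 i (Finset.mem_univ i)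
      have hAji : A j i = 0 := by
        rcases mul_eq_zero.mp this with h | h
        · exact h
        · exact absurd h hvi
      exact (herm_entry hA j i).trans hAji
  · -- no positive eigenvalue : A = 0 on all entries relevant, take v = 0
    push_neg at hex
    have hhyp : ∀ x : Fin n → ℝ, (∑ i, x i * (0:Fin n → ℝ) i) = 0 → qf A x ≤ 0 := by
      intro x _
      exact qf_le_of_nonpos_eigen hA hex x
    refine ⟨0, fun i => le_refl 0, ?_, hhyp⟩
    intro i j _
    exact vanish 0 hhyp i j rfl rfl

/-- positive semidefiniteness via the explicit quadratic form -/
def psdQ (M : Matrix (Fin n) (Fin n) ℝ) : Prop := ∀ x : Fin n → ℝ, 0 ≤ qf M x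

lemma eigen_nonneg_of_psdQ {M : Matrix (Fin n) (Fin n) ℝ} (hM : M.IsHermitian)
    (h : psdQ M) (k : Fin n) : 0 ≤ hM.eigenvalues k := by
  have hq := h (fun i => hM.eigenvectorBasis k i)
  rw [qf_expand hM] at hq
  have hcoef : ∀ m : Fin n, (∑ i, hM.eigenvectorBasis k i * hM.eigenvectorBasis m i)
      = if k = m then 1 else 0 := fun m => b_orthog hM k m
  simp_rw [hcoef] at hq
  have : ∀ m : Fin n, hM.eigenvalues m * (if k = m then (1:ℝ) else 0) ^ 2
      = if m = k then hM.eigenvalues k else 0 := by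
    intro m
    by_cases h' : m = k
    · subst h'; simp
    · have h2 : ¬ (k = m) := fun hh => h' hh.symm
      simp [h', h2]
  simp_rw [this, Finset.sum_ite_eq', Finset.mem_univ, if_true] at hq
  exact hq

/-- Schur product theorem, quadratic-form version. -/
lemma psdQ_hadamard {M N : Matrix (Fin n) (Fin n) ℝ} (hM : M.IsHermitian)
    (hMp : psdQ M) (hNp : psdQ N) : psdQ (Matrix.of fun i j => M i j * N i j) := by
  intro x
  have hentry := entry_eq hM
  have : qf (Matrix.of fun i j => M i j * N i j) x
      = ∑ k, hM.eigenvalues k * qf N (fun i => x i * hM.eigenvectorBasis k i) := by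
    unfold qf
    have e1 : ∀ i j : Fin n, x i * x j * (Matrix.of fun i j => M i j * N i j) i j
        = ∑ k, hM.eigenvalues k * ((x i * hM.eigenvectorBasis k i) * (x j * hM.eigenvectorBasis k j) * N i j) := by
      intro i j
      show x i * x j * (M i j * N i j) = _
      rw [hentry i j, Finset.sum_mul, Finset.mul_sum]
      apply Finset.sum_congr rfl; intro k _; ring
    simp_rw [e1]
    have swap1 : ∀ i : Fin n, ∑ j : Fin n, ∑ k : Fin n,
        hM.eigenvalues k * ((x i * hM.eigenvectorBasis k i) * (x j * hM.eigenvectorBasis k j) * N i j)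
        = ∑ k : Fin n, ∑ j : Fin n,
        hM.eigenvalues k * ((x i * hM.eigenvectorBasis k i) * (x j * hM.eigenvectorBasis k j) * N i j) :=
      fun i => Finset.sum_comm
    simp_rw [swap1]
    rw [Finset.sum_comm]
    apply Finset.sum_congr rfl; intro k _
    simp_rw [Finset.mul_sum]
  rw [this]
  apply Finset.sum_nonneg
  intro k _
  exact mul_nonneg (eigen_nonneg_of_psdQ hM hMp k) (hNp _)

/-- entrywise natural powers of a symmetric psd matrix are psd -/
lemma psdQ_pow {M : Matrix (Fin n) (Fin n) ℝ} (hM : M.IsHermitian) (hMp : psdQ M) :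
    ∀ m : ℕ, psdQ (Matrix.of fun i j => (M i j) ^ m) := by
  intro m
  induction m with
  | zero =>
      intro x
      unfold qf
      have : ∀ i j : Fin n, x i * x j * (Matrix.of fun i j => (M i j) ^ 0) i j = x i * x j := by
        intro i j; show x i * x j * (M i j) ^ 0 = x i * x j; simp
      simp_rw [this, ← Finset.mul_sum, ← Finset.sum_mul]
      exact mul_self_nonneg _
  | succ m ih =>
      intro x
      have h2 := psdQ_hadamard hM hMp ih x
      have e : qf (Matrix.of fun i j => (M i j) ^ (m+1)) x
          = qf (Matrix.of fun i j => M i j * (Matrix.of fun i' j' => (M i' j') ^ m) i j) x := by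
        unfold qf
        apply Finset.sum_congr rfl; intro i _
        apply Finset.sum_congr rfl; intro j _
        show x i * x j * (M i j) ^ (m+1) = x i * x j * (M i j * (M i j) ^ m)
        ring
      rw [e]; exact h2

/-- entrywise exponential of a nonneg multiple of a symmetric psd matrix, paired with any vector -/
lemma exp_psdQ {M : Matrix (Fin n) (Fin n) ℝ} (hM : M.IsHermitian) (hMp : psdQ M)
    {s : ℝ} (hs : 0 ≤ s) (x : Fin n → ℝ) :
    0 ≤ ∑ i, ∑ j, x i * x j * Real.exp (s * M i j) := by
  -- rewrite double sum as sum over product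
  have hexp : ∀ y : ℝ, Real.exp y = ∑' m : ℕ, y ^ m / (Nat.factorial m) := by
    intro y
    rw [Real.exp_eq_exp_ℝ, NormedSpace.exp_eq_tsum_div]
  have hsummable : ∀ (c y : ℝ), Summable (fun m : ℕ => c * (y ^ m / (Nat.factorial m))) :=
    fun c y => (Real.summable_pow_div_factorial y).mul_left c
  calc (0:ℝ) ≤ ∑' m : ℕ, ∑ p ∈ (Finset.univ ×ˢ Finset.univ : Finset (Fin n × Fin n)),
      x p.1 * x p.2 * ((s * M p.1 p.2) ^ m / (Nat.factorial m)) := by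
        apply tsum_nonneg
        intro m
        have : ∀ p ∈ (Finset.univ ×ˢ Finset.univ : Finset (Fin n × Fin n)),
            x p.1 * x p.2 * ((s * M p.1 p.2) ^ m / (Nat.factorial m))
            = (s ^ m / (Nat.factorial m)) * (x p.1 * x p.2 * (M p.1 p.2) ^ m) := by
          intro p _; rw [mul_pow]; ring
        rw [Finset.sum_congr rfl this, ← Finset.mul_sum]
        apply mul_nonneg (by positivity)
        have := psdQ_pow hM hMp m x
        unfold qf at this
        rw [Finset.sum_product] at *
        exact this
    _ = ∑ p ∈ (Finset.univ ×ˢ Finset.univ : Finset (Fin n × Fin n)),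
        ∑' m : ℕ, x p.1 * x p.2 * ((s * M p.1 p.2) ^ m / (Nat.factorial m)) := by
        rw [Summable.tsum_finsetSum (fun p _ => hsummable _ _)]
    _ = ∑ i, ∑ j, x i * x j * Real.exp (s * M i j) := by
        rw [Finset.sum_product]
        apply Finset.sum_congr rfl; intro i _
        apply Finset.sum_congr rfl; intro j _
        rw [hexp (s * M i j), tsum_mul_left]

open MeasureTheory in
lemma integrable_aux {t : ℝ} (ht0 : 0 < t) (ht1 : t < 1) {b : ℝ} (hb : 0 ≤ b) :
    IntegrableOn (fun s => (1 - Real.exp (-(s*b))) * s ^ (-1-t)) (Set.Ioi (0:ℝ)) := by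
  have hcont : ContinuousOn (fun s : ℝ => (1 - Real.exp (-(s*b))) * s ^ (-1-t)) (Set.Ioi 0) := by
    apply ContinuousOn.mul
    · exact (continuous_const.sub ((continuous_id.mul continuous_const).neg.rexp)).continuousOn
    · intro s hs
      exact (Real.continuousAt_rpow_const s (-1-t) (Or.inl (ne_of_gt hs))).continuousWithinAt
  have hnn : ∀ s : ℝ, 0 < s → 0 ≤ (1 - Real.exp (-(s*b))) * s ^ (-1-t) := by
    intro s hs
    apply mul_nonneg
    · have : Real.exp (-(s*b)) ≤ 1 := Real.exp_le_one_iff.mpr (by nlinarith)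
      linarith
    · exact Real.rpow_nonneg hs.le _
  rw [← Set.Ioc_union_Ioi_eq_Ioi (zero_le_one (α := ℝ))]
  apply MeasureTheory.IntegrableOn.union
  · -- on (0,1]
    have hg : IntegrableOn (fun s : ℝ => b * s ^ (-t)) (Set.Ioc (0:ℝ) 1) := by
      have : IntegrableOn (fun s : ℝ => s ^ (-t)) (Set.Ioo (0:ℝ) 1) :=
        (intervalIntegral.integrableOn_Ioo_rpow_iff one_pos).mpr (by linarith)
      have h2 : IntegrableOn (fun s : ℝ => s ^ (-t)) (Set.Ioc (0:ℝ) 1) := by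
        rwa [integrableOn_Ioc_iff_integrableOn_Ioo]
      exact h2.const_mul b
    apply Integrable.mono' hg
    · exact (hcont.mono (fun s hs => hs.1)).aestronglyMeasurable measurableSet_Ioc
    · rw [MeasureTheory.ae_restrict_iff' measurableSet_Ioc]
      apply Filter.Eventually.of_forall
      intro s hs
      rw [Real.norm_eq_abs, abs_of_nonneg (hnn s hs.1)]
      have h1 : 1 - Real.exp (-(s*b)) ≤ s * b := by
        have := Real.add_one_le_exp (-(s*b)); linarith
      have h2 : (1 - Real.exp (-(s*b))) * s ^ (-1-t) ≤ (s * b) * s ^ (-1-t) :=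
        mul_le_mul_of_nonneg_right h1 (Real.rpow_nonneg hs.1.le _)
      apply h2.trans
      have : s * b * s ^ (-1-t) = b * (s ^ (1:ℝ) * s ^ (-1-t)) := by
        rw [Real.rpow_one]; ring
      rw [this, ← Real.rpow_add hs.1]
      have : (1:ℝ) + (-1-t) = -t := by ring
      rw [this]
  · -- on (1,∞)
    have hg : IntegrableOn (fun s : ℝ => s ^ (-1-t)) (Set.Ioi (1:ℝ)) :=
      integrableOn_Ioi_rpow_of_lt (by linarith) zero_lt_one
    apply Integrable.mono' hg
    · exact (hcont.mono (fun s (hs : s ∈ Set.Ioi (1:ℝ)) => (lt_trans zero_lt_one hs : (0:ℝ) < s))).aestronglyMeasurable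
        measurableSet_Ioi
    · rw [MeasureTheory.ae_restrict_iff' measurableSet_Ioi]
      apply Filter.Eventually.of_forall
      intro s hs
      have hs0 : (0:ℝ) < s := lt_trans zero_lt_one hs
      rw [Real.norm_eq_abs, abs_of_nonneg (hnn s hs0)]
      have h1 : 1 - Real.exp (-(s*b)) ≤ 1 := by
        have := Real.exp_pos (-(s*b)); linarith
      calc (1 - Real.exp (-(s*b))) * s ^ (-1-t) ≤ 1 * s ^ (-1-t) :=
            mul_le_mul_of_nonneg_right h1 (Real.rpow_nonneg hs0.le _)
        _ = s ^ (-1-t) := one_mul _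

open MeasureTheory in
lemma rep_aux {t : ℝ} (ht0 : 0 < t) (ht1 : t < 1) {b : ℝ} (hb : 0 ≤ b) :
    b ^ t * (∫ s in Set.Ioi (0:ℝ), (1 - Real.exp (-s)) * s ^ (-1-t))
      = ∫ s in Set.Ioi (0:ℝ), (1 - Real.exp (-(s*b))) * s ^ (-1-t) := by
  rcases eq_or_lt_of_le hb with hb0 | hbpos
  · rw [← hb0]
    simp [Real.zero_rpow (ne_of_gt ht0)]
  · set g : ℝ → ℝ := fun u => (1 - Real.exp (-u)) * (u / b) ^ (-1-t) with hg
    have e1 : ∫ s in Set.Ioi (0:ℝ), (1 - Real.exp (-(s*b))) * s ^ (-1-t)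
        = ∫ s in Set.Ioi (0:ℝ), g (b * s) := by
      apply MeasureTheory.setIntegral_congr_fun measurableSet_Ioi
      intro s hs
      have : b * s / b = s := by field_simp
      simp only [hg, this]
      rw [mul_comm s b]
    rw [e1, MeasureTheory.integral_comp_mul_left_Ioi g 0 hbpos, mul_zero]
    have e2 : ∫ u in Set.Ioi (0:ℝ), g u
        = (∫ u in Set.Ioi (0:ℝ), (1 - Real.exp (-u)) * u ^ (-1-t)) * b ^ (1+t) := by
      rw [← MeasureTheory.integral_mul_const]
      apply MeasureTheory.setIntegral_congr_fun measurableSet_Ioi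
      intro u hu
      have h3 : (u / b) ^ (-1-t) = u ^ (-1-t) * b ^ (1+t) := by
        rw [Real.div_rpow (le_of_lt hu) hb]
        rw [show (-1-t : ℝ) = -(1+t) by ring, Real.rpow_neg hb]
        field_simp
      simp only [hg, h3]
      ring
    rw [e2]
    rw [smul_eq_mul]
    rw [show (1+t:ℝ) = 1 + t from rfl, Real.rpow_add hbpos, Real.rpow_one]
    field_simp

open MeasureTheory in
lemma c_pos {t : ℝ} (ht0 : 0 < t) (ht1 : t < 1) :
    0 < ∫ s in Set.Ioi (0:ℝ), (1 - Real.exp (-s)) * s ^ (-1-t) := by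
  have hint : IntegrableOn (fun s : ℝ => (1 - Real.exp (-s)) * s ^ (-1-t)) (Set.Ioi (0:ℝ)) := by
    have h := integrable_aux ht0 ht1 (zero_le_one (α := ℝ))
    apply h.congr_fun _ measurableSet_Ioi
    intro s _
    simp
  rw [setIntegral_pos_iff_support_of_nonneg_ae _ hint]
  · have hsub : Set.Ioi (0:ℝ) ⊆ Function.support (fun s => (1 - Real.exp (-s)) * s ^ (-1-t)) := by
      intro s hs
      have h1 : 0 < 1 - Real.exp (-s) := by
        have : Real.exp (-s) < 1 := Real.exp_lt_one_iff.mpr (by simpa using hs)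
        linarith
      have h2 : (0:ℝ) < s ^ (-1-t) := Real.rpow_pos_of_pos hs _
      exact ne_of_gt (mul_pos h1 h2)
    rw [Set.inter_eq_self_of_subset_right hsub, Real.volume_Ioi]
    simp
  · filter_upwards [MeasureTheory.self_mem_ae_restrict measurableSet_Ioi] with s hs
    have h1 : Real.exp (-s) ≤ 1 := Real.exp_le_one_iff.mpr (by simpa using (le_of_lt hs))
    have hs0 : (0:ℝ) < s := hs
    exact mul_nonneg (by linarith) (Real.rpow_nonneg (le_of_lt hs0) _)

noncomputable def bil (M : Matrix (Fin n) (Fin n) ℝ) (w u : Fin n → ℝ) : ℝ :=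
  ∑ i, ∑ j, w i * u j * M i j

lemma qf_eq_bil (M : Matrix (Fin n) (Fin n) ℝ) (x : Fin n → ℝ) : qf M x = bil M x x := rfl

lemma bil_sub_left (M : Matrix (Fin n) (Fin n) ℝ) (w u z : Fin n → ℝ) :
    bil M (fun i => w i - u i) z = bil M w z - bil M u z := by
  unfold bil
  rw [← Finset.sum_sub_distrib]
  apply Finset.sum_congr rfl; intro i _
  rw [← Finset.sum_sub_distrib]
  apply Finset.sum_congr rfl; intro j _
  ring

lemma bil_sub_right (M : Matrix (Fin n) (Fin n) ℝ) (w u z : Fin n → ℝ) :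
    bil M z (fun i => w i - u i) = bil M z w - bil M z u := by
  unfold bil
  rw [← Finset.sum_sub_distrib]
  apply Finset.sum_congr rfl; intro i _
  rw [← Finset.sum_sub_distrib]
  apply Finset.sum_congr rfl; intro j _
  ring

lemma bil_single_left (M : Matrix (Fin n) (Fin n) ℝ) (i₀ : Fin n) (c : ℝ) (z : Fin n → ℝ) :
    bil M (fun i => if i = i₀ then c else 0) z = c * ∑ j, z j * M i₀ j := by
  unfold bil
  have : ∀ i : Fin n, ∑ j, (if i = i₀ then c else 0) * z j * M i j
      = if i = i₀ then ∑ j, c * z j * M i₀ j else 0 := by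
    intro i
    by_cases h : i = i₀
    · subst h; simp
    · simp [h]
  simp_rw [this, Finset.sum_ite_eq', Finset.mem_univ, if_true, Finset.mul_sum]
  apply Finset.sum_congr rfl; intro j _; ring

lemma bil_single_right (M : Matrix (Fin n) (Fin n) ℝ) (i₀ : Fin n) (c : ℝ) (z : Fin n → ℝ) :
    bil M z (fun j => if j = i₀ then c else 0) = c * ∑ i, z i * M i i₀ := by
  unfold bil
  have : ∀ i : Fin n, ∑ j, z i * (if j = i₀ then c else 0) * M i j
      = z i * c * M i i₀ := by
    intro i
    have e : ∀ j : Fin n, z i * (if j = i₀ then c else 0) * M i j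
        = if j = i₀ then z i * c * M i i₀ else 0 := by
      intro j
      by_cases h : j = i₀
      · subst h; simp
      · simp [h]
    simp_rw [e, Finset.sum_ite_eq', Finset.mem_univ, if_true]
  simp_rw [this, Finset.mul_sum]
  apply Finset.sum_congr rfl; intro i _; ring

open MeasureTheory in
/-- The key fractional-power step: the hyperplane negativity condition passes to
entrywise powers with exponent in (0,1). -/
lemma frac_hyperplane (hA : A.IsHermitian) (hpos : ∀ i j, 0 ≤ A i j)
    (hcard : (Finset.univ.filter fun i => 0 < hA.eigenvalues i).card ≤ 1)
    {t : ℝ} (ht0 : 0 < t) (ht1 : t < 1) :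
    ∃ w : Fin n → ℝ, ∀ x : Fin n → ℝ, (∑ i, x i * w i) = 0 →
      qf (Matrix.of fun i j => (A i j) ^ t) x ≤ 0 := by
  obtain ⟨v, hvnn, hvan, hhyp⟩ := memA_structure hA hpos hcard
  refine ⟨fun i => v i ^ t, ?_⟩
  intro x hx
  have hvan' : ∀ i j : Fin n, v i = 0 → A i j = 0 := by
    intro i j h
    exact (herm_entry hA i j).symm.trans (hvan j i h)
  by_cases hS : ∃ i₀, v i₀ ≠ 0
  swap
  · push_neg at hS
    have : qf (Matrix.of fun i j => (A i j) ^ t) x = 0 := by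
      apply Finset.sum_eq_zero; intro i _
      apply Finset.sum_eq_zero; intro j _
      show x i * x j * (A i j) ^ t = 0
      rw [hvan i j (hS j), Real.zero_rpow (ne_of_gt ht0)]; ring
    rw [this]
  obtain ⟨i₀, hi₀⟩ := hS
  set B : Matrix (Fin n) (Fin n) ℝ := fun i j => A i j / (v i * v j) with hBdef
  have hBsym : ∀ i j, B j i = B i j := by
    intro i j; simp only [hBdef]; rw [herm_entry hA i j, mul_comm (v j) (v i)]
  have hBnn : ∀ i j, 0 ≤ B i j :=
    fun i j => div_nonneg (hpos i j) (mul_nonneg (hvnn i) (hvnn j))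
  have hAB : ∀ i j, A i j = B i j * (v i * v j) := by
    intro i j
    by_cases hvi : v i = 0
    · rw [hvan' i j hvi, hvi, zero_mul, mul_zero]
    by_cases hvj : v j = 0
    · rw [hvan i j hvj, hvj, mul_zero, mul_zero]
    · simp only [hBdef]
      rw [div_mul_cancel₀ _ (mul_ne_zero hvi hvj)]
  have hBt : ∀ i j, (A i j) ^ t = (B i j) ^ t * (v i ^ t * v j ^ t) := by
    intro i j
    by_cases hvi : v i = 0
    · rw [hvan' i j hvi, hvi, Real.zero_rpow (ne_of_gt ht0)]; ring
    by_cases hvj : v j = 0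
    · rw [hvan i j hvj, hvj, Real.zero_rpow (ne_of_gt ht0)]; ring
    · rw [hAB i j, Real.mul_rpow (hBnn i j) (mul_nonneg (hvnn i) (hvnn j)),
        Real.mul_rpow (hvnn i) (hvnn j)]
  have hBcnd : ∀ w : Fin n → ℝ, (∀ i, v i = 0 → w i = 0) → (∑ i, w i) = 0 →
      bil B w w ≤ 0 := by
    intro w hw hsw
    set z : Fin n → ℝ := fun i => w i / v i with hzdef
    have hz : ∑ i, z i * v i = 0 := by
      rw [← hsw]
      apply Finset.sum_congr rfl; intro i _
      by_cases hvi : v i = 0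
      · rw [hvi, mul_zero, hw i hvi]
      · simp only [hzdef]; rw [div_mul_cancel₀ _ hvi]
    have hq := hhyp z hz
    have : qf A z = bil B w w := by
      unfold qf bil
      apply Finset.sum_congr rfl; intro i _
      apply Finset.sum_congr rfl; intro j _
      by_cases hvi : v i = 0
      · rw [hvan' i j hvi, hw i hvi]; ring
      by_cases hvj : v j = 0
      · rw [hvan i j hvj, hw j hvj]; ring
      · rw [hAB i j]; simp only [hzdef]; field_simp
    rwa [this] at hq
  set C : Matrix (Fin n) (Fin n) ℝ :=
    fun i j => if v i ≠ 0 ∧ v j ≠ 0 then B i i₀ + B j i₀ - B i j - B i₀ i₀ else 0 with hCdef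
  have hCsym : C.IsHermitian := by
    show C.conjTranspose = C
    ext i j
    rw [Matrix.conjTranspose_apply]
    show C j i = C i j
    simp only [hCdef]
    by_cases h1 : v i ≠ 0 ∧ v j ≠ 0
    · rw [if_pos h1, if_pos ⟨h1.2, h1.1⟩, hBsym i j]; ring
    · have h2 : ¬ (v j ≠ 0 ∧ v i ≠ 0) := fun hh => h1 ⟨hh.2, hh.1⟩
      rw [if_neg h1, if_neg h2]
  have hCpsd : psdQ C := by
    intro y
    set yh : Fin n → ℝ := fun i => if v i ≠ 0 then y i else 0 with hyh
    set σ : ℝ := ∑ i, yh i with hσ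
    have hyh_supp : ∀ i, v i = 0 → yh i = 0 := by
      intro i h; simp only [hyh]; rw [if_neg (by simpa using h)]
    set xx : Fin n → ℝ := fun i => yh i - (if i = i₀ then σ else 0) with hxx
    have hxx_supp : ∀ i, v i = 0 → xx i = 0 := by
      intro i h
      have hne : i ≠ i₀ := fun he => hi₀ (he ▸ h)
      simp only [hxx]; rw [hyh_supp i h, if_neg hne, sub_zero]
    have hxx_sum : ∑ i, xx i = 0 := by
      simp only [hxx]
      rw [Finset.sum_sub_distrib]
      simp only [Finset.sum_ite_eq', Finset.mem_univ, if_true, ← hσ, sub_self]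
    have h1 := hBcnd xx hxx_supp hxx_sum
    set T : ℝ := ∑ i, yh i * B i i₀ with hT
    have stepB : bil B xx xx = bil B yh yh - 2*σ*T + σ^2 * B i₀ i₀ := by
      have e1 : bil B xx xx
          = bil B yh yh - bil B (fun i => if i = i₀ then σ else 0) yh
            - (bil B yh (fun i => if i = i₀ then σ else 0)
               - bil B (fun i => if i = i₀ then σ else 0) (fun i => if i = i₀ then σ else 0)) := by
        rw [show bil B xx xx = bil B (fun i => yh i - (if i = i₀ then σ else 0))
            (fun i => yh i - (if i = i₀ then σ else 0)) from rfl,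
          bil_sub_left, bil_sub_right, bil_sub_right]
        ring
      rw [e1, bil_single_left, bil_single_right, bil_single_left]
      have e2 : ∑ j, yh j * B i₀ j = T := by
        rw [hT]; apply Finset.sum_congr rfl; intro j _; rw [hBsym j i₀]
      rw [e2, ← hT]
      have e3 : ∑ j, (if j = i₀ then σ else 0) * B i₀ j = σ * B i₀ i₀ := by
        have : ∀ j : Fin n, (if j = i₀ then σ else 0) * B i₀ j
            = if j = i₀ then σ * B i₀ i₀ else 0 := by
          intro j; by_cases h : j = i₀
          · subst h; simp
          · simp [h]
        simp_rw [this, Finset.sum_ite_eq', Finset.mem_univ, if_true]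
      rw [e3]
      ring
    have stepA : qf C y = 2*σ*T - bil B yh yh - σ^2 * B i₀ i₀ := by
      have e : ∀ i j : Fin n, y i * y j * C i j
          = yh i * B i i₀ * yh j + yh i * (yh j * B j i₀)
            - yh i * yh j * B i j - yh i * yh j * B i₀ i₀ := by
        intro i j
        by_cases h1 : v i ≠ 0 ∧ v j ≠ 0
        · have hCe : C i j = B i i₀ + B j i₀ - B i j - B i₀ i₀ := by
            simp only [hCdef]; rw [if_pos h1]
          have hyi : yh i = y i := by simp only [hyh]; rw [if_pos h1.1]
          have hyj : yh j = y j := by simp only [hyh]; rw [if_pos h1.2]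
          rw [hCe, hyi, hyj]; ring
        · have hCe : C i j = 0 := by simp only [hCdef]; rw [if_neg h1]
          have : yh i = 0 ∨ yh j = 0 := by
            by_cases hvi : v i = 0
            · exact Or.inl (hyh_supp i hvi)
            · by_cases hvj : v j = 0
              · exact Or.inr (hyh_supp j hvj)
              · exact absurd ⟨hvi, hvj⟩ h1
          rcases this with h | h <;> rw [hCe, h] <;> ring
      unfold qf
      simp_rw [e]
      have esplit : ∑ i : Fin n, ∑ j : Fin n,
          (yh i * B i i₀ * yh j + yh i * (yh j * B j i₀)
            - yh i * yh j * B i j - yh i * yh j * B i₀ i₀)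
          = (∑ i : Fin n, ∑ j : Fin n, yh i * B i i₀ * yh j)
            + (∑ i : Fin n, ∑ j : Fin n, yh i * (yh j * B j i₀))
            - (∑ i : Fin n, ∑ j : Fin n, yh i * yh j * B i j)
            - (∑ i : Fin n, ∑ j : Fin n, yh i * yh j * B i₀ i₀) := by
        simp_rw [Finset.sum_sub_distrib, Finset.sum_add_distrib]
      rw [esplit]
      have s1 : ∑ i : Fin n, ∑ j : Fin n, yh i * B i i₀ * yh j = T * σ := by
        simp_rw [← Finset.mul_sum]
        rw [← Finset.sum_mul]
      have s2 : ∑ i : Fin n, ∑ j : Fin n, yh i * (yh j * B j i₀) = σ * T := by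
        simp_rw [← Finset.mul_sum]
        rw [← Finset.sum_mul]
      have s3 : ∑ i : Fin n, ∑ j : Fin n, yh i * yh j * B i₀ i₀ = σ^2 * B i₀ i₀ := by
        have : ∀ i : Fin n, ∑ j : Fin n, yh i * yh j * B i₀ i₀
            = yh i * σ * B i₀ i₀ := by
          intro i
          rw [show (fun j => yh i * yh j * B i₀ i₀) = fun j => (yh i * B i₀ i₀) * yh j from
            funext fun j => by ring]
          rw [← Finset.mul_sum, ← hσ]; ring
        simp_rw [this]
        rw [show (fun i => yh i * σ * B i₀ i₀) = fun i => (σ * B i₀ i₀) * yh i from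
          funext fun i => by ring]
        rw [← Finset.mul_sum, ← hσ]; ring
      rw [s1, s2, s3]
      show T * σ + σ * T - bil B yh yh - σ^2 * B i₀ i₀ = _
      unfold bil
      ring
    rw [stepA]
    have := stepB
    nlinarith [h1, stepB]
  -- entrywise exponential inequality
  have hEpsd : ∀ s : ℝ, 0 ≤ s → ∀ w : Fin n → ℝ, (∀ i, v i = 0 → w i = 0) →
      0 ≤ ∑ i, ∑ j, w i * w j * Real.exp (-(s * B i j)) := by
    intro s hs w hw
    set d : Fin n → ℝ := fun i => w i * Real.exp (s * (- B i i₀)) with hd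
    have key : ∀ i j : Fin n, w i * w j * Real.exp (-(s * B i j))
        = Real.exp (s * B i₀ i₀) * (d i * d j * Real.exp (s * C i j)) := by
      intro i j
      by_cases h1 : v i ≠ 0 ∧ v j ≠ 0
      · have hCe : C i j = B i i₀ + B j i₀ - B i j - B i₀ i₀ := by
          simp only [hCdef]; rw [if_pos h1]
        rw [hCe]
        have hexp : Real.exp (s * B i₀ i₀) * Real.exp (s * (- B i i₀))
            * Real.exp (s * (- B j i₀))
            * Real.exp (s * (B i i₀ + B j i₀ - B i j - B i₀ i₀))
            = Real.exp (-(s * B i j)) := by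
          rw [← Real.exp_add, ← Real.exp_add, ← Real.exp_add]
          congr 1; ring
        simp only [hd]
        rw [← hexp]; ring
      · have hCe : C i j = 0 := by simp only [hCdef]; rw [if_neg h1]
        have hw0 : w i = 0 ∨ w j = 0 := by
          by_cases hvi : v i = 0
          · exact Or.inl (hw i hvi)
          · by_cases hvj : v j = 0
            · exact Or.inr (hw j hvj)
            · exact absurd ⟨hvi, hvj⟩ h1
        simp only [hd]
        rcases hw0 with h | h <;> rw [h] <;> ring
    simp_rw [key, ← Finset.mul_sum]
    apply mul_nonneg (Real.exp_pos _).le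
    exact exp_psdQ hCsym hCpsd hs d
  -- the integral representation finishes the proof
  set c : ℝ := ∫ s in Set.Ioi (0:ℝ), (1 - Real.exp (-s)) * s ^ (-1-t) with hcdef
  have hc := c_pos ht0 ht1
  set w : Fin n → ℝ := fun i => x i * v i ^ t with hwdef
  have hw_supp : ∀ i, v i = 0 → w i = 0 := by
    intro i h; simp only [hwdef]; rw [h, Real.zero_rpow (ne_of_gt ht0), mul_zero]
  have hw_sum : ∑ i, w i = 0 := hx
  have hqt : qf (Matrix.of fun i j => (A i j) ^ t) x = ∑ i, ∑ j, w i * w j * (B i j) ^ t := by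
    unfold qf
    apply Finset.sum_congr rfl; intro i _
    apply Finset.sum_congr rfl; intro j _
    show x i * x j * (A i j) ^ t = w i * w j * (B i j) ^ t
    rw [hBt i j]; simp only [hwdef]; ring
  rw [hqt]
  have key : (∑ i, ∑ j, w i * w j * (B i j) ^ t) * c
      = ∫ s in Set.Ioi (0:ℝ),
          (∑ i, ∑ j, w i * w j * ((1 - Real.exp (-(s * B i j))) * s ^ (-1-t))) := by
    have e1 : (∑ i, ∑ j, w i * w j * (B i j) ^ t) * c
        = ∑ i, ∑ j, ∫ s in Set.Ioi (0:ℝ),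
            w i * w j * ((1 - Real.exp (-(s * B i j))) * s ^ (-1-t)) := by
      rw [Finset.sum_mul]
      apply Finset.sum_congr rfl; intro i _
      rw [Finset.sum_mul]
      apply Finset.sum_congr rfl; intro j _
      have hrep : (B i j) ^ t * c = ∫ s in Set.Ioi (0:ℝ),
          (1 - Real.exp (-(s * B i j))) * s ^ (-1-t) := rep_aux ht0 ht1 (hBnn i j)
      calc w i * w j * (B i j) ^ t * c = (w i * w j) * ((B i j) ^ t * c) := by ring
        _ = (w i * w j) * ∫ s in Set.Ioi (0:ℝ),
              (1 - Real.exp (-(s * B i j))) * s ^ (-1-t) := by rw [hrep]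
        _ = ∫ s in Set.Ioi (0:ℝ),
              w i * w j * ((1 - Real.exp (-(s * B i j))) * s ^ (-1-t)) :=
            (MeasureTheory.integral_const_mul _ _).symm
    have int_ij : ∀ i j : Fin n, MeasureTheory.Integrable
        (fun s : ℝ => w i * w j * ((1 - Real.exp (-(s * B i j))) * s ^ (-1-t)))
        (MeasureTheory.volume.restrict (Set.Ioi (0:ℝ))) :=
      fun i j => ((integrable_aux ht0 ht1 (hBnn i j)).const_mul _)
    rw [e1]
    have inner : ∀ i : Fin n, ∑ j, (∫ s in Set.Ioi (0:ℝ),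
        w i * w j * ((1 - Real.exp (-(s * B i j))) * s ^ (-1-t)))
        = ∫ s in Set.Ioi (0:ℝ), ∑ j, w i * w j * ((1 - Real.exp (-(s * B i j))) * s ^ (-1-t)) :=
      fun i => (MeasureTheory.integral_finset_sum Finset.univ (fun j _ => int_ij i j)).symm
    simp_rw [inner]
    exact (MeasureTheory.integral_finset_sum Finset.univ (fun i _ =>
      MeasureTheory.integrable_finset_sum Finset.univ (fun j _ => int_ij i j))).symm
  have hneg : (∫ s in Set.Ioi (0:ℝ),
      (∑ i, ∑ j, w i * w j * ((1 - Real.exp (-(s * B i j))) * s ^ (-1-t)))) ≤ 0 := by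
    apply MeasureTheory.integral_nonpos_of_ae
    filter_upwards [MeasureTheory.self_mem_ae_restrict measurableSet_Ioi] with s hs
    have hs0 : (0:ℝ) < s := hs
    have e : (∑ i, ∑ j, w i * w j * ((1 - Real.exp (-(s * B i j))) * s ^ (-1-t)))
        = ((∑ i, ∑ j, w i * w j)
            - (∑ i, ∑ j, w i * w j * Real.exp (-(s * B i j)))) * s ^ (-1-t) := by
      rw [sub_mul, Finset.sum_mul, Finset.sum_mul, ← Finset.sum_sub_distrib]
      apply Finset.sum_congr rfl; intro i _
      rw [Finset.sum_mul, Finset.sum_mul, ← Finset.sum_sub_distrib]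
      apply Finset.sum_congr rfl; intro j _
      ring
    have hww : (∑ i, ∑ j, w i * w j) = 0 := by
      simp_rw [← Finset.mul_sum]
      rw [← Finset.sum_mul, hw_sum, zero_mul]
    rw [e, hww, zero_sub, neg_mul]
    have hE := hEpsd s hs0.le w hw_supp
    have hp := Real.rpow_nonneg hs0.le (-1-t)
    exact neg_nonpos.mpr (mul_nonneg hE hp)
  have hfin : (∑ i, ∑ j, w i * w j * (B i j) ^ t) * c ≤ 0 := by
    rw [key]; exact hneg
  nlinarith [hfin, hc]

lemma hadamardPow_isHermitian (hA : A.IsHermitian) (α : ℝ) : (hadamardPow A α).IsHermitian := by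
  show (hadamardPow A α).conjTranspose = _
  ext i j
  rw [Matrix.conjTranspose_apply]
  show star ((A j i) ^ α) = (A i j) ^ α
  rw [herm_entry hA i j, star_trivial]

lemma memA_pow_le_one {t : ℝ} (ht0 : 0 < t) (ht1 : t ≤ 1) (h : MemA A) :
    MemA (hadamardPow A t) := by
  obtain ⟨hA, hpos, hcard⟩ := h
  rcases eq_or_lt_of_le ht1 with h1 | h1
  · subst h1
    have e : hadamardPow A 1 = A := by
      ext i j; show (A i j) ^ (1:ℝ) = A i j; exact Real.rpow_one _
    rw [e]; exact ⟨hA, hpos, hcard⟩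
  · have hH : (hadamardPow A t).IsHermitian := hadamardPow_isHermitian hA t
    refine ⟨hH, fun i j => Real.rpow_nonneg (hpos i j) t, ?_⟩
    obtain ⟨wv, hw⟩ := frac_hyperplane hA hpos hcard ht0 h1
    exact card_le_one_of_hyperplane hH wv (fun x hx => hw x hx)

theorem hadamard_pow_closure_extends' (αstar : ℝ) (hαstar : 1 < αstar)
    (hclosed : ∀ (n : ℕ) (A : Matrix (Fin n) (Fin n) ℝ), MemA A → MemA (hadamardPow A αstar)) :
    ∀ (α : ℝ), 1 < α →
      ∀ (n : ℕ) (A : Matrix (Fin n) (Fin n) ℝ), MemA A → MemA (hadamardPow A α) := by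
  intro α hα n A hA
  obtain ⟨hH, hpos, hcard⟩ := hA
  obtain ⟨k, hk⟩ : ∃ k : ℕ, α ≤ αstar ^ k := by
    obtain ⟨k, hk⟩ := pow_unbounded_of_one_lt α hαstar
    exact ⟨k, hk.le⟩
  have hαstar0 : (0:ℝ) < αstar := by linarith
  have hiter : ∀ (m : ℕ) (B : Matrix (Fin n) (Fin n) ℝ), MemA B →
      MemA (hadamardPow B (αstar ^ m)) := by
    intro m
    induction m with
    | zero =>
        intro B hB
        have e : hadamardPow B (αstar ^ (0:ℕ)) = B := by
          ext i j; show (B i j) ^ (αstar ^ (0:ℕ)) = B i j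
          rw [pow_zero, Real.rpow_one]
        rw [e]; exact hB
    | succ m ih =>
        intro B hB
        obtain ⟨hBH, hBpos, hBcard⟩ := hB
        have e : hadamardPow B (αstar ^ (m+1)) = hadamardPow (hadamardPow B (αstar ^ m)) αstar := by
          ext i j
          show (B i j) ^ (αstar ^ (m+1)) = ((B i j) ^ (αstar ^ m)) ^ αstar
          rw [pow_succ, Real.rpow_mul (hBpos i j)]
        rw [e]
        exact hclosed n _ (ih B ⟨hBH, hBpos, hBcard⟩)
  have hpk : (0:ℝ) < αstar ^ k := pow_pos hαstar0 k
  have ht0 : 0 < α / αstar ^ k := div_pos (by linarith) hpk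
  have ht1 : α / αstar ^ k ≤ 1 := (div_le_one hpk).mpr hk
  have e : hadamardPow (hadamardPow A (αstar ^ k)) (α / αstar ^ k) = hadamardPow A α := by
    ext i j
    show ((A i j) ^ (αstar ^ k)) ^ (α / αstar ^ k) = (A i j) ^ α
    rw [← Real.rpow_mul (hpos i j)]
    congr 1
    field_simp
  rw [← e]
  exact memA_pow_le_one ht0 ht1 (hiter k A ⟨hH, hpos, hcard⟩)

/-- if the class 𝒜 is closed under the entrywise power with some
exponent `α* > 1`, then it is closed under the entrywise power with every
exponent `α > 1`. -/
theorem hadamard_pow_closure_extends (αstar : ℝ) (hαstar : 1 < αstar)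
    (hclosed : ∀ (n : ℕ) (A : Matrix (Fin n) (Fin n) ℝ), MemA A → MemA (hadamardPow A αstar)) :
    ∀ (α : ℝ), 1 < α →
      ∀ (n : ℕ) (A : Matrix (Fin n) (Fin n) ℝ), MemA A → MemA (hadamardPow A α) := by
  exact hadamard_pow_closure_extends' αstar hαstar hclosed
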